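/- arXiv:2504.02376 — 5 statements merged into one kernel-verified Lean document; each statement's English description precedes it below -/
import Mathlib

section
/- For every i ≥ 0 and every state s with s_N ≥ 1, the value-iteration iterates satisfy V_i(s) = V_i(R(s)), where R(s) is the state obtained from s by deleting all clusters i with η(i) = 0 (keeping the remaining clusters in their original order). -/
open scoped BigOperators

/-- A state of the reservation process: `s.1 + 1` clusters (so at least one),
with the number of active terminals in each cluster given by `s.2`. -/
abbrev RState : Type := Σ m : ℕ, (Fin (m + 1) → ℕ)

/-- `sN s` is the total number of active terminals in state `s`. -/
def sN (s : RState) : ℕ := ∑ j, s.2 j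

/-- An action assigns a transmission probability to each cluster; we record it as a
function on `ℕ` and require it to take values in `[0,1]` on the first `M` coordinates. -/
def IsActionOn (M : ℕ) (p : ℕ → ℝ) : Prop := ∀ j < M, 0 ≤ p j ∧ p j ≤ 1

/-- The splitting weight `w(η, η', p)`: the probability that in each cluster `i` exactly
`η' i` of the `η i` terminals do not transmit, each terminal of cluster `i`
transmitting independently with probability `p i`. -/
noncomputable def w {M : ℕ} (η η' : Fin M → ℕ) (p : ℕ → ℝ) : ℝ :=
  ∏ i, (Nat.choose (η i) (η' i) : ℝ) * (1 - p i.val) ^ (η' i) * (p i.val) ^ (η i - η' i)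

/-- The possible outcomes at state `s`: a choice, for each cluster, of how many
terminals do not transmit (at most the cluster size). -/
abbrev Outcome (s : RState) : Type := ∀ j : Fin (s.1 + 1), Fin (s.2 j + 1)

/-- The cluster configuration `η'` of non-transmitters determined by an outcome. -/
def outEta {s : RState} (f : Outcome s) : Fin (s.1 + 1) → ℕ := fun j => (f j : ℕ)

/-- The next state resulting from state `s` when `η' j` terminals of cluster `j` kept
silent: idle (no transmitter) and success (one transmitter) keep the clusters, while a
collision (at least two transmitters) moves all colliding terminals to a new cluster. -/
def step (s : RState) (η' : Fin (s.1 + 1) → ℕ) : RState :=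
  if (∑ j, (s.2 j - η' j)) ≤ 1 then ⟨s.1, η'⟩
  else ⟨s.1 + 1, Fin.snoc η' (∑ j, (s.2 j - η' j))⟩

/-- Transition probability `P(s' | s, p)` of the reservation process. -/
noncomputable def transP (s : RState) (p : ℕ → ℝ) (s' : RState) : ℝ :=
  ∑ f : Outcome s, if step s (outEta f) = s' then w s.2 (outEta f) p else 0

/-- The value-iteration iterates `V_i` of the genie-aided Goal-MDP:
`V_0 = 0`; target states (no active terminals) have value `0`; otherwise
`V_{i+1}(s)` is the infimum over actions of `1 + ∑_{s'} P(s' | s, p) V_i(s')`. -/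
noncomputable def Vit : ℕ → RState → ℝ
  | 0, _ => 0
  | i + 1, s =>
    if sN s = 0 then 0
    else sInf { x : ℝ | ∃ p : ℕ → ℝ, IsActionOn (s.1 + 1) p ∧
      x = 1 + ∑ f : Outcome s, w s.2 (outEta f) p * Vit i (step s (outEta f)) }

/-- The state obtained from a list of cluster sizes (a nonempty list `l` yields the
state with `l.length` clusters whose sizes are the entries of `l`, in order). -/
def ofList (l : List ℕ) : RState := ⟨l.length - 1, fun i => l.getD i.val 0⟩

/-- `removeZeros s` is the state `R(s)` obtained from `s` by deleting all clusters
containing zero terminals, keeping the remaining clusters in their original order. -/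
def removeZeros (s : RState) : RState := ofList ((List.ofFn s.2).filter (fun n => n ≠ 0))
open Finset in
theorem sum_inj_zero {α β M : Type*} [Fintype α] [Fintype β] [DecidableEq β] [AddCommMonoid M]
    (φ : α → β) (hφ : Function.Injective φ) (g : β → M)
    (h0 : ∀ b, (¬ ∃ a, φ a = b) → g b = 0) : ∑ b, g b = ∑ a, g (φ a) := by
  rw [← Finset.sum_image (f := g) (g := φ) (by intro x _ y _ h; exact hφ h)]
  apply (Finset.sum_subset (Finset.subset_univ _) _).symm
  intro b _ hb
  exact h0 b (by simpa [Finset.mem_image] using hb)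

open Finset in
theorem prod_inj_one {α β M : Type*} [Fintype α] [Fintype β] [DecidableEq β] [CommMonoid M]
    (φ : α → β) (hφ : Function.Injective φ) (g : β → M)
    (h0 : ∀ b, (¬ ∃ a, φ a = b) → g b = 1) : ∏ b, g b = ∏ a, g (φ a) := by
  rw [← Finset.prod_image (f := g) (g := φ) (by intro x _ y _ h; exact hφ h)]
  apply (Finset.prod_subset (Finset.subset_univ _) _).symm
  intro b _ hb
  exact h0 b (by simpa [Finset.mem_image] using hb)

theorem master (i : ℕ) : ∀ (s t : RState) (φ : Fin (t.1 + 1) → Fin (s.1 + 1)),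
    Function.Injective φ → (∀ j, t.2 j = s.2 (φ j)) →
    (∀ b, (¬ ∃ a, φ a = b) → s.2 b = 0) → Vit i s = Vit i t := by
  induction i with
  | zero => intro s t φ _ _ _; rfl
  | succ i IH =>
    intro s t φ hinj hη hz
    have hsum0 : ∀ (g : Fin (s.1+1) → ℕ), (∀ b, (¬ ∃ a, φ a = b) → g b = 0) →
        ∑ b, g b = ∑ a, g (φ a) := fun g h => sum_inj_zero φ hinj g h
    have hsN : sN s = sN t := by
      rw [sN, sN, hsum0 s.2 hz]
      exact Finset.sum_congr rfl fun a _ => (hη a).symm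
    by_cases h0 : sN s = 0
    · simp [Vit, h0, hsN ▸ h0]
    · -- outcome bijection
      set Φ : Outcome s → Outcome t := fun f j => ⟨(f (φ j)).val, by rw [hη]; exact (f (φ j)).isLt⟩ with hΦdef
      have hforced : ∀ (f : Outcome s) b, (¬ ∃ a, φ a = b) → (f b : ℕ) = 0 := by
        intro f b hb
        have h2 : s.2 b + 1 ≤ 1 := by have := hz b hb; omega
        exact Nat.lt_one_iff.mp (lt_of_lt_of_le (f b).isLt h2)
      have hΦbij : Function.Bijective Φ := by
        constructor
        · intro f f' h
          funext b
          by_cases hb : ∃ a, φ a = b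
          · obtain ⟨a, rfl⟩ := hb
            have h2 : (Φ f a).val = (Φ f' a).val := congrArg Fin.val (congrFun h a)
            exact Fin.ext h2
          · exact Fin.ext (by rw [hforced f b hb, hforced f' b hb])
        · intro g
          refine ⟨fun b => if h : ∃ a, φ a = b then
              ⟨(g h.choose).val, lt_of_lt_of_le (g h.choose).isLt
                (le_of_eq (by rw [hη, h.choose_spec]))⟩
            else ⟨0, Nat.succ_pos _⟩, ?_⟩
          funext j
          apply Fin.ext
          show (dite (∃ a, φ a = φ j) _ _ : Fin (s.2 (φ j) + 1)).val = (g j).val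
          have hex : ∃ a, φ a = φ j := ⟨j, rfl⟩
          rw [dif_pos hex]
          exact congrArg (fun x => (g x : ℕ)) (hinj hex.choose_spec)
      have hcs : ∀ f : Outcome s,
          (∑ j, (t.2 j - outEta (Φ f) j)) = (∑ b, (s.2 b - outEta f b)) := by
        intro f
        rw [hsum0 (fun b => s.2 b - outEta f b)
          (fun b hb => by show s.2 b - outEta f b = 0; rw [hz b hb]; omega)]
        exact Finset.sum_congr rfl fun j _ => by rw [hη j]; rfl
      have hstepV : ∀ f : Outcome s,
          Vit i (step s (outEta f)) = Vit i (step t (outEta (Φ f))) := by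
        intro f
        simp only [step]
        rw [hcs f]
        by_cases hc : (∑ b, (s.2 b - outEta f b)) ≤ 1
        · rw [if_pos hc, if_pos hc]
          exact IH ⟨s.1, outEta f⟩ ⟨t.1, outEta (Φ f)⟩ φ hinj (fun j => rfl)
            (fun b hb => hforced f b hb)
        · rw [if_neg hc, if_neg hc]
          set c := ∑ b, (s.2 b - outEta f b) with hcdef
          set φ' : Fin (t.1 + 1 + 1) → Fin (s.1 + 1 + 1) :=
            Fin.snoc (fun j => Fin.castSucc (φ j)) (Fin.last (s.1 + 1)) with hφ'def
          have hφ'cast : ∀ j : Fin (t.1 + 1), φ' (Fin.castSucc j) = Fin.castSucc (φ j) := by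
            intro j; simp [hφ'def]
          have hφ'last : φ' (Fin.last (t.1 + 1)) = Fin.last (s.1 + 1) := by
            simp [hφ'def]
          apply IH ⟨s.1 + 1, Fin.snoc (outEta f) c⟩ ⟨t.1 + 1, Fin.snoc (outEta (Φ f)) c⟩ φ'
          · intro a b hab
            rcases Fin.eq_castSucc_or_eq_last a with ⟨a0, rfl⟩ | rfl <;>
              rcases Fin.eq_castSucc_or_eq_last b with ⟨b0, rfl⟩ | rfl
            · rw [hφ'cast, hφ'cast] at hab
              exact congrArg Fin.castSucc (hinj (Fin.castSucc_injective _ hab))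
            · rw [hφ'cast, hφ'last] at hab
              exact absurd hab (Fin.ne_of_lt (Fin.castSucc_lt_last _))
            · rw [hφ'cast, hφ'last] at hab
              exact absurd hab.symm (Fin.ne_of_lt (Fin.castSucc_lt_last _))
            · rfl
          · intro j
            dsimp only
            rcases Fin.eq_castSucc_or_eq_last j with ⟨j0, rfl⟩ | rfl
            · rw [hφ'cast, Fin.snoc_castSucc, Fin.snoc_castSucc]
              rfl
            · rw [hφ'last, Fin.snoc_last, Fin.snoc_last]
          · intro b hb
            dsimp only at hb ⊢
            rcases Fin.eq_castSucc_or_eq_last b with ⟨b0, rfl⟩ | rfl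
            · rw [Fin.snoc_castSucc]
              refine hforced f b0 fun ⟨a, ha⟩ => hb ⟨Fin.castSucc a, ?_⟩
              rw [hφ'cast, ha]
            · exact absurd ⟨Fin.last _, hφ'last⟩ hb
      have hw : ∀ (p q : ℕ → ℝ), (∀ j : Fin (t.1 + 1), q j.val = p (φ j).val) →
          ∀ f : Outcome s, w s.2 (outEta f) p = w t.2 (outEta (Φ f)) q := by
        intro p q hpq f
        rw [w, w, prod_inj_one φ hinj
          (fun b => (Nat.choose (s.2 b) (outEta f b) : ℝ) * (1 - p b.val) ^ (outEta f b)
            * (p b.val) ^ (s.2 b - outEta f b))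
          (fun b hb => by simp [outEta, hz b hb, hforced f b hb])]
        refine Finset.prod_congr rfl fun j _ => ?_
        rw [hη j, hpq j]
        rfl
      have hcore : ∀ (p q : ℕ → ℝ), (∀ j : Fin (t.1 + 1), q j.val = p (φ j).val) →
          (∑ f : Outcome s, w s.2 (outEta f) p * Vit i (step s (outEta f)))
          = ∑ g : Outcome t, w t.2 (outEta g) q * Vit i (step t (outEta g)) := by
        intro p q hpq
        exact Fintype.sum_bijective Φ hΦbij _ _
          (fun f => by rw [hw p q hpq f, hstepV f])
      have h0t : ¬ sN t = 0 := by rw [← hsN]; exact h0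
      simp only [Vit]
      rw [if_neg h0, if_neg h0t]
      congr 1
      ext x
      constructor
      · rintro ⟨p, hp, rfl⟩
        refine ⟨fun n => if h : n < t.1 + 1 then p ((φ ⟨n, h⟩ : Fin (s.1 + 1)) : ℕ) else 0, ?_, ?_⟩
        · intro n hn
          dsimp only
          rw [dif_pos hn]
          exact hp _ (φ ⟨n, hn⟩).isLt
        · have hpq : ∀ j : Fin (t.1 + 1),
              (fun n => if h : n < t.1 + 1 then p ((φ ⟨n, h⟩ : Fin (s.1 + 1)) : ℕ) else 0) (j : ℕ)
                = p ((φ j : Fin (s.1 + 1)) : ℕ) := by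
            intro j
            show (if h : (j : ℕ) < t.1 + 1 then p ((φ ⟨(j : ℕ), h⟩ : Fin (s.1 + 1)) : ℕ) else 0)
              = p ((φ j : Fin (s.1 + 1)) : ℕ)
            rw [dif_pos j.isLt]
          rw [hcore p
            (fun n => if h : n < t.1 + 1 then p ((φ ⟨n, h⟩ : Fin (s.1 + 1)) : ℕ) else 0) hpq]
      · rintro ⟨q, hq, rfl⟩
        refine ⟨fun n => if hr : ∃ a : Fin (t.1 + 1), ((φ a : Fin (s.1 + 1)) : ℕ) = n then
            q (hr.choose : ℕ) else 0, ?_, ?_⟩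
        · intro n hn
          dsimp only
          by_cases hr : ∃ a : Fin (t.1 + 1), ((φ a : Fin (s.1 + 1)) : ℕ) = n
          · rw [dif_pos hr]
            exact hq _ (hr.choose).isLt
          · rw [dif_neg hr]
            exact ⟨le_refl 0, zero_le_one⟩
        · have hpq : ∀ j : Fin (t.1 + 1), q (j : ℕ) =
              (fun n => if hr : ∃ a : Fin (t.1 + 1), ((φ a : Fin (s.1 + 1)) : ℕ) = n then
                q (hr.choose : ℕ) else 0) ((φ j : Fin (s.1 + 1)) : ℕ) := by
            intro j
            show q (j : ℕ) = (if hr : ∃ a : Fin (t.1 + 1),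
                ((φ a : Fin (s.1 + 1)) : ℕ) = ((φ j : Fin (s.1 + 1)) : ℕ) then q (hr.choose : ℕ) else 0)
            have hr : ∃ a : Fin (t.1 + 1), ((φ a : Fin (s.1 + 1)) : ℕ) = ((φ j : Fin (s.1 + 1)) : ℕ) :=
              ⟨j, rfl⟩
            rw [dif_pos hr]
            exact (congrArg (fun a : Fin (t.1 + 1) => q (a : ℕ)) (hinj (Fin.ext hr.choose_spec))).symm
          rw [hcore
            (fun n => if hr : ∃ a : Fin (t.1 + 1), ((φ a : Fin (s.1 + 1)) : ℕ) = n then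
              q (hr.choose : ℕ) else 0) q hpq]

theorem val_succAbove' {n : ℕ} (k : Fin (n + 1)) (j : Fin n) :
    (k.succAbove j : ℕ) = if (j : ℕ) < (k : ℕ) then (j : ℕ) else (j : ℕ) + 1 := by
  rw [Fin.succAbove]
  split
  · rename_i h; rw [Fin.lt_def] at h; simp at h; rw [if_pos h]; simp
  · rename_i h; rw [Fin.lt_def] at h; simp at h; rw [if_neg (by omega)]; simp

theorem ofList_ofFn {m : ℕ} (η : Fin (m + 1) → ℕ) : ofList (List.ofFn η) = ⟨m, η⟩ := by
  have hl : (List.ofFn η).length = m + 1 := List.length_ofFn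
  have h1 : (ofList (List.ofFn η)).1 = m := by show (List.ofFn η).length - 1 = m; omega
  refine Sigma.ext h1 ?_
  show HEq (fun i : Fin ((List.ofFn η).length - 1 + 1) => (List.ofFn η).getD i.val 0) η
  have h2 : (List.ofFn η).length - 1 + 1 = m + 1 := by omega
  refine (Fin.heq_fun_iff h2).mpr ?_
  intro i
  have hi : (i : ℕ) < (List.ofFn η).length := by omega
  rw [List.getD_eq_getElem _ _ hi, List.getElem_ofFn]

theorem removeZeros_of_no_zero {m : ℕ} (η : Fin (m + 1) → ℕ) (h : ∀ b, η b ≠ 0) :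
    removeZeros ⟨m, η⟩ = ⟨m, η⟩ := by
  rw [removeZeros]
  have : (List.ofFn η).filter (fun n => n ≠ 0) = List.ofFn η := by
    rw [List.filter_eq_self]
    intro a ha
    rw [List.mem_ofFn] at ha
    obtain ⟨b, rfl⟩ := ha
    simpa using h b
  rw [this]
  exact ofList_ofFn η

theorem ofFn_succAbove_eq_eraseIdx {m : ℕ} (η : Fin (m + 2) → ℕ) (k : Fin (m + 2)) :
    List.ofFn (η ∘ k.succAbove) = (List.ofFn η).eraseIdx (k : ℕ) := by
  have hk : (k : ℕ) < (List.ofFn η).length := by simp [k.isLt]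
  apply List.ext_getElem
  · rw [List.length_eraseIdx_of_lt hk]; simp
  · intro i h1 h2
    rw [List.getElem_eraseIdx]
    simp only [List.getElem_ofFn, Function.comp_apply]
    have hi : i < m + 1 := by simpa using h1
    split
    · rename_i hik
      congr 1
      apply Fin.ext
      rw [val_succAbove']
      simp [hik]
    · rename_i hik
      congr 1
      apply Fin.ext
      rw [val_succAbove']
      simp [hik]

theorem filter_eraseIdx_of_not (p : ℕ → Bool) :
    ∀ (l : List ℕ) (k : ℕ), (hk : k < l.length) → p (l[k]) = false →
      (l.eraseIdx k).filter p = l.filter p := by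
  intro l
  induction l with
  | nil => intro k hk; simp at hk
  | cons a l ihl =>
    intro k hk hp
    cases k with
    | zero =>
      simp only [List.getElem_cons_zero] at hp
      simp [List.eraseIdx, List.filter_cons, hp]
    | succ k =>
      simp only [List.getElem_cons_succ] at hp
      have hk' : k < l.length := by simpa using hk
      simp only [List.eraseIdx, List.filter_cons]
      rw [ihl k hk' hp]

theorem remove_one (i m : ℕ) (η : Fin (m + 2) → ℕ) (k : Fin (m + 2)) (hk : η k = 0) :
    Vit i ⟨m + 1, η⟩ = Vit i ⟨m, η ∘ k.succAbove⟩ := by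
  refine master i ⟨m + 1, η⟩ ⟨m, η ∘ k.succAbove⟩ k.succAbove Fin.succAbove_right_injective
    (fun j => rfl) ?_
  intro b hb
  have hbk : b = k := by
    by_contra hne
    exact hb (Fin.exists_succAbove_eq hne)
  rw [hbk]
  exact hk

theorem removeZeros_remove_one {m : ℕ} (η : Fin (m + 2) → ℕ) (k : Fin (m + 2)) (hk : η k = 0) :
    removeZeros ⟨m + 1, η⟩ = removeZeros ⟨m, η ∘ k.succAbove⟩ := by
  rw [removeZeros, removeZeros]
  congr 1
  show (List.ofFn η).filter (fun n => n ≠ 0) = (List.ofFn (η ∘ k.succAbove)).filter (fun n => n ≠ 0)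
  rw [ofFn_succAbove_eq_eraseIdx η k]
  have hklt : (k : ℕ) < (List.ofFn η).length := by simp [k.isLt]
  rw [filter_eraseIdx_of_not _ (List.ofFn η) (k : ℕ) hklt]
  have hgk : (List.ofFn η)[(k : ℕ)]'hklt = η k := by rw [List.getElem_ofFn]
  rw [hgk, hk]
  simp

/-- **Lemma 1.** For every `i ≥ 0` and every state `s` with `s_N ≥ 1`, the
value-iteration iterates satisfy `V_i(s) = V_i(R(s))`. -/
theorem valueIteration_removeZeros (i : ℕ) (s : RState) (hN : 1 ≤ sN s) :
    Vit i s = Vit i (removeZeros s) := by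
  obtain ⟨m, η⟩ := s
  induction m with
  | zero =>
    rw [removeZeros_of_no_zero η (fun b => ?_)]
    have hb : b = 0 := Fin.ext (by omega)
    have : sN ⟨0, η⟩ = η 0 := by simp [sN]
    rw [hb]
    omega
  | succ m ih =>
    by_cases hex : ∃ k, η k = 0
    · obtain ⟨k, hk⟩ := hex
      have hsN : sN ⟨m + 1, η⟩ = sN ⟨m, η ∘ k.succAbove⟩ := by
        show ∑ j, η j = ∑ j, η (k.succAbove j)
        rw [Fin.sum_univ_succAbove η k, hk]
        simp
      rw [remove_one i m η k hk, removeZeros_remove_one η k hk]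
      exact ih (η ∘ k.succAbove) (by rw [← hsN]; exact hN)
    · push_neg at hex
      rw [removeZeros_of_no_zero η hex]
end

section
/- For every i ≥ 0, every state s = (M, η), and every permutation σ of {1,…,M}, the value-iteration iterates satisfy V_i((M, η ∘ σ)) = V_i((M, η)); i.e., V_i is invariant under permuting the clusters of a state. -/
open scoped BigOperators

/-- Extend a permutation of `Fin (m+1)` to `Fin (m+2)` by fixing the last element. -/
def extPerm {m : ℕ} (σ : Equiv.Perm (Fin (m + 1))) : Equiv.Perm (Fin (m + 2)) where
  toFun := Fin.lastCases (Fin.last (m + 1)) (fun k => (σ k).castSucc)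
  invFun := Fin.lastCases (Fin.last (m + 1)) (fun k => (σ.symm k).castSucc)
  left_inv := by
    intro j
    induction j using Fin.lastCases with
    | last => simp
    | cast k => simp
  right_inv := by
    intro j
    induction j using Fin.lastCases with
    | last => simp
    | cast k => simp

lemma snoc_comp_extPerm {m : ℕ} (σ : Equiv.Perm (Fin (m + 1))) (ν : Fin (m + 1) → ℕ)
    (c : ℕ) : (Fin.snoc ν c : Fin (m + 2) → ℕ) ∘ (extPerm σ) = Fin.snoc (ν ∘ σ) c := by
  funext j
  induction j using Fin.lastCases with
  | last => simp [extPerm]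
  | cast k => simp [extPerm]

lemma key_subset (i m : ℕ) (η : Fin (m + 1) → ℕ) (σ : Equiv.Perm (Fin (m + 1)))
    (hV : ∀ (k : ℕ) (ν : Fin (k + 1) → ℕ) (τ : Equiv.Perm (Fin (k + 1))),
      Vit i ⟨k, ν ∘ τ⟩ = Vit i ⟨k, ν⟩)
    (p : ℕ → ℝ) (hp : IsActionOn (m + 1) p) :
    ∃ q : ℕ → ℝ, IsActionOn (m + 1) q ∧
      ∑ f : Outcome ⟨m, η ∘ σ⟩, w (η ∘ σ) (outEta f) q * Vit i (step ⟨m, η ∘ σ⟩ (outEta f))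
        = ∑ g : Outcome ⟨m, η⟩, w η (outEta (s := ⟨m, η⟩) g) p * Vit i (step ⟨m, η⟩ (outEta (s := ⟨m, η⟩) g)) := by
  refine ⟨fun n => if h : n < m + 1 then p ((σ ⟨n, h⟩ : Fin (m + 1)) : ℕ) else 0, ?_, ?_⟩
  · intro j hj
    simp only [dif_pos hj]
    exact hp _ (Fin.is_lt _)
  · refine (Fintype.sum_equiv
      ((Equiv.piCongrLeft (fun b => Fin (η b + 1)) σ).symm :
        Outcome ⟨m, η⟩ ≃ Outcome ⟨m, η ∘ σ⟩) _ _ ?_).symm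
    intro g
    have hEg : outEta (s := ⟨m, η ∘ σ⟩) ((Equiv.piCongrLeft (fun b => Fin (η b + 1)) σ).symm g)
        = outEta (s := ⟨m, η⟩) g ∘ σ := rfl
    rw [hEg]
    have hw : w (η ∘ σ) (outEta (s := ⟨m, η⟩) g ∘ σ)
        (fun n => if h : n < m + 1 then p ((σ ⟨n, h⟩ : Fin (m + 1)) : ℕ) else 0)
        = w η (outEta (s := ⟨m, η⟩) g) p := by
      rw [w, w, ← Equiv.prod_comp σ (fun i : Fin (m + 1) =>
        (Nat.choose (η i) (outEta (s := ⟨m, η⟩) g i) : ℝ) * (1 - p i.val) ^ (outEta (s := ⟨m, η⟩) g i)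
          * (p i.val) ^ (η i - outEta (s := ⟨m, η⟩) g i))]
      refine Finset.prod_congr rfl fun j _ => ?_
      have : (if h : (j : ℕ) < m + 1 then p ((σ ⟨(j : ℕ), h⟩ : Fin (m + 1)) : ℕ) else 0)
          = p ((σ j : Fin (m + 1)) : ℕ) := by
        rw [dif_pos j.isLt]
      simp only [Function.comp_apply, this]
    have hC : (∑ j, ((η ∘ σ) j - (outEta (s := ⟨m, η⟩) g ∘ σ) j))
        = ∑ j, (η j - outEta (s := ⟨m, η⟩) g j) :=
      Equiv.sum_comp σ (fun i => η i - outEta (s := ⟨m, η⟩) g i)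
    have hs : Vit i (step ⟨m, η ∘ σ⟩ (outEta (s := ⟨m, η⟩) g ∘ σ))
        = Vit i (step ⟨m, η⟩ (outEta (s := ⟨m, η⟩) g)) := by
      rw [step, step]
      simp only [hC]
      by_cases hle : (∑ j, (η j - outEta (s := ⟨m, η⟩) g j)) ≤ 1
      · rw [if_pos hle, if_pos hle]
        exact hV m (outEta (s := ⟨m, η⟩) g) σ
      · rw [if_neg hle, if_neg hle]
        rw [← snoc_comp_extPerm σ (outEta (s := ⟨m, η⟩) g)]
        exact hV (m + 1) _ (extPerm σ)
    rw [hw, hs]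

/-- **Lemma 2.** For every `i ≥ 0`, every state `s = (M, η)` and every permutation `σ`
of the clusters, the value-iteration iterates satisfy `V_i((M, η ∘ σ)) = V_i((M, η))`:
`V_i` is invariant under permuting the clusters of a state. -/
theorem valueIteration_perm (i : ℕ) (m : ℕ) (η : Fin (m + 1) → ℕ)
    (σ : Equiv.Perm (Fin (m + 1))) :
    Vit i ⟨m, η ∘ σ⟩ = Vit i ⟨m, η⟩ := by
  induction i generalizing m η σ with
  | zero => rfl
  | succ i IH =>
    have hsN : sN ⟨m, η ∘ σ⟩ = sN ⟨m, η⟩ := by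
      unfold sN
      exact Equiv.sum_comp σ η
    simp only [Vit]
    rw [hsN]
    by_cases h0 : sN ⟨m, η⟩ = 0
    · simp [h0]
    · rw [if_neg h0, if_neg h0]
      congr 1
      ext x
      simp only [Set.mem_setOf_eq]
      constructor
      · rintro ⟨p, hp, rfl⟩
        obtain ⟨q, hq, hsum⟩ := key_subset i m (η ∘ σ) σ⁻¹ IH p hp
        have hηc : (η ∘ σ) ∘ ⇑σ⁻¹ = η := by
          funext j; simp
        rw [hηc] at hsum
        exact ⟨q, hq, by rw [hsum]⟩
      · rintro ⟨p, hp, rfl⟩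
        obtain ⟨q, hq, hsum⟩ := key_subset i m η σ IH p hp
        exact ⟨q, hq, by rw [hsum]⟩
end

section
/- For every i ≥ 0 and every state s, V_i(s) = V^-_i(F(s)), where F(s) is the reduced state obtained from s by deleting all clusters with η(i) = 0 and listing the remaining cluster sizes in ascending order, and V^-_i are the value-iteration iterates of the reduced Goal-MDP whose transition probabilities are P^-(s' | s, p) = ∑_{s̃ : F(s̃) = s'} P(s̃ | s, p). -/
open scoped BigOperators

/-- The reduction map `F`: delete all clusters containing zero terminals and list the
remaining cluster sizes in ascending order.  A reduced state is recorded as the sorted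
list of its (positive) cluster sizes; the empty list represents the target. -/
def reduceF (s : RState) : List ℕ :=
  List.insertionSort (· ≤ ·) ((List.ofFn s.2).filter (fun n => n ≠ 0))

/-- The value-iteration iterates `V⁻_i` of the reduced Goal-MDP, whose transition
probabilities are `P⁻(s' | s, p) = ∑_{s̃ : F(s̃) = s'} P(s̃ | s, p)`; equivalently, the
Bellman expectation is `∑_{η'} w(η, η', p) · V⁻_i(F(step(s, η')))`. -/
noncomputable def Vred : ℕ → List ℕ → ℝ
  | 0, _ => 0
  | i + 1, l =>
    if l.sum = 0 then 0
    else sInf { x : ℝ | ∃ p : ℕ → ℝ, IsActionOn ((ofList l).1 + 1) p ∧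
      x = 1 + ∑ f : Outcome (ofList l),
        w (ofList l).2 (outEta f) p * Vred i (reduceF (step (ofList l) (outEta f))) }

-- auxiliary lemmas

lemma sort_eq_of_perm {l₁ l₂ : List ℕ} (h : l₁.Perm l₂) :
    List.insertionSort (· ≤ ·) l₁ = List.insertionSort (· ≤ ·) l₂ :=
  List.Perm.eq_of_pairwise'
    (List.pairwise_insertionSort _ l₁) (List.pairwise_insertionSort _ l₂)
    (((List.perm_insertionSort _ l₁).trans h).trans (List.perm_insertionSort _ l₂).symm)

def msF (s : RState) : Multiset ℕ :=
  (Multiset.map s.2 Finset.univ.val).filter (· ≠ 0)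

lemma coe_filter_ofFn {n : ℕ} (g : Fin n → ℕ) :
    (((List.ofFn g).filter (fun x => x ≠ 0) : List ℕ) : Multiset ℕ)
      = (Multiset.map g Finset.univ.val).filter (· ≠ 0) := by
  rw [Fin.univ_val_map]
  rfl

lemma reduceF_eq_of_msF {s t : RState} (h : msF s = msF t) : reduceF s = reduceF t := by
  apply sort_eq_of_perm
  rw [← Multiset.coe_eq_coe, coe_filter_ofFn, coe_filter_ofFn]
  exact h

lemma filter_ne_zero_sum (l : List ℕ) : (l.filter (fun x => x ≠ 0)).sum = l.sum := by
  induction l with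
  | nil => rfl
  | cons a t ih =>
    simp only [ne_eq, decide_not] at ih ⊢
    by_cases h : a = 0 <;> simp [List.filter_cons, h, ih]

lemma reduceF_sum (s : RState) : (reduceF s).sum = sN s := by
  unfold reduceF sN
  rw [(List.perm_insertionSort _ _).sum_eq, filter_ne_zero_sum, List.sum_ofFn]

lemma exists_inj (n : ℕ) (l : List ℕ) :
    ∀ (g : Fin n → ℕ) (A : Finset (Fin n)),
    (l : Multiset ℕ) = (A.val.map g).filter (· ≠ 0) →
    ∃ ι : Fin l.length → Fin n, Function.Injective ι ∧ (∀ i, ι i ∈ A) ∧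
      (∀ i, g (ι i) = l.getD i.val 0) ∧ (∀ j ∈ A, (∀ i, ι i ≠ j) → g j = 0) := by
  induction l with
  | nil =>
    intro g A h
    refine ⟨Fin.elim0, fun i => i.elim0, fun i => i.elim0, fun i => i.elim0, ?_⟩
    intro j hj _
    have h0 : Multiset.filter (· ≠ 0) (A.val.map g) = 0 := h.symm
    have := (Multiset.filter_eq_nil.1 h0) (g j) (Multiset.mem_map_of_mem g hj)
    simpa using this
  | cons a l ih =>
    intro g A h
    have ha : a ∈ (A.val.map g).filter (· ≠ 0) := by
      rw [← h]; exact Multiset.mem_cons_self a (l : Multiset ℕ)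
    obtain ⟨hmem, hane⟩ := Multiset.mem_filter.1 ha
    obtain ⟨j₀, hj₀A, hgj₀⟩ := Multiset.mem_map.1 hmem
    have hAval : A.val = j₀ ::ₘ (A.erase j₀).val := by
      rw [Finset.erase_val, Multiset.cons_erase hj₀A]
    have h' : (l : Multiset ℕ) = ((A.erase j₀).val.map g).filter (· ≠ 0) := by
      have hco : ((a :: l : List ℕ) : Multiset ℕ) = a ::ₘ (l : Multiset ℕ) := rfl
      rw [hco, hAval, Multiset.map_cons, hgj₀,
        Multiset.filter_cons_of_pos (p := fun x => x ≠ 0)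
          (Multiset.map g (A.erase j₀).val) hane] at h
      exact (Multiset.cons_inj_right a).1 h
    obtain ⟨ι', hinj', hmem', hval', hcompl'⟩ := ih g (A.erase j₀) h'
    have hι'ne : ∀ i, ι' i ≠ j₀ := fun i => Finset.ne_of_mem_erase (hmem' i)
    refine ⟨Fin.cases j₀ (fun i => ι' i), ?_, ?_, ?_, ?_⟩
    · intro x y hxy
      induction x using Fin.cases with
      | zero =>
        induction y using Fin.cases with
        | zero => rfl
        | succ y =>
          simp only [Fin.cases_zero, Fin.cases_succ] at hxy
          exact absurd hxy.symm (hι'ne y)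
      | succ x =>
        induction y using Fin.cases with
        | zero =>
          simp only [Fin.cases_zero, Fin.cases_succ] at hxy
          exact absurd hxy (hι'ne x)
        | succ y =>
          simp only [Fin.cases_succ] at hxy
          exact congrArg Fin.succ (hinj' hxy)
    · intro i
      induction i using Fin.cases with
      | zero => simpa using hj₀A
      | succ i => simpa using Finset.mem_of_mem_erase (hmem' i)
    · intro i
      induction i using Fin.cases with
      | zero => simpa using hgj₀
      | succ i => simpa using hval' i
    · intro j hjA hunhit
      have hj0 : j ≠ j₀ := by
        intro e
        exact hunhit ⟨0, Nat.succ_pos _⟩ (by simpa [e] using (rfl : j₀ = j₀))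
      refine hcompl' j (Finset.mem_erase.2 ⟨hj0, hjA⟩) ?_
      intro i
      have := hunhit i.succ
      simpa using this

lemma msF_aux {n m : ℕ} (ι : Fin m → Fin n) (hinj : Function.Injective ι)
    (η' : Fin n → ℕ) (h0 : ∀ j, (∀ i, ι i ≠ j) → η' j = 0) :
    (Multiset.map η' Finset.univ.val).filter (· ≠ 0)
      = (Multiset.map (fun i => η' (ι i)) Finset.univ.val).filter (· ≠ 0) := by
  classical
  have hAB : Finset.univ.filter (fun j => η' j ≠ 0)
      = (Finset.univ.filter (fun i => η' (ι i) ≠ 0)).map ⟨ι, hinj⟩ := by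
    ext j
    simp only [Finset.mem_filter, Finset.mem_univ, true_and, Finset.mem_map,
      Function.Embedding.coeFn_mk]
    constructor
    · intro hj
      by_cases hex : ∃ i, ι i = j
      · obtain ⟨i, rfl⟩ := hex
        exact ⟨i, hj, rfl⟩
      · push_neg at hex
        exact absurd (h0 j hex) hj
    · rintro ⟨i, hi, rfl⟩
      exact hi
  have h1 : (Multiset.map η' Finset.univ.val).filter (· ≠ 0)
      = Multiset.map η' (Finset.univ.filter (fun j => η' j ≠ 0)).val := by
    rw [Multiset.filter_map, Finset.filter_val]
    rfl
  have h2 : (Multiset.map (fun i => η' (ι i)) Finset.univ.val).filter (· ≠ 0)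
      = Multiset.map (fun i => η' (ι i))
          (Finset.univ.filter (fun i => η' (ι i) ≠ 0)).val := by
    rw [Multiset.filter_map, Finset.filter_val]
    rfl
  rw [h1, h2, hAB, Finset.map_val, Multiset.map_map]
  rfl

lemma msF_snoc {n : ℕ} (η' : Fin n → ℕ) (T : ℕ) :
    Multiset.map (Fin.snoc η' T : Fin (n+1) → ℕ) Finset.univ.val
      = T ::ₘ Multiset.map η' Finset.univ.val := by
  rw [Fin.univ_val_map, Fin.univ_val_map]
  have h1 : List.ofFn (Fin.snoc η' T : Fin (n+1) → ℕ)
      = (List.ofFn η').concat T := by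
    have hfun : (fun i : Fin n => (Fin.snoc η' T : Fin (n+1) → ℕ) i.castSucc) = η' := by
      funext i; simp
    rw [List.ofFn_succ', hfun]
    simp
  rw [h1, List.concat_eq_append]
  have h2 : ((List.ofFn η' ++ [T] : List ℕ) : Multiset ℕ)
      = ((T :: List.ofFn η' : List ℕ) : Multiset ℕ) :=
    Multiset.coe_eq_coe.2 (List.perm_append_singleton T (List.ofFn η'))
  rw [h2]
  rfl

def Phi (s t : RState) (ι : Fin (t.1+1) → Fin (s.1+1))
    (hsize : ∀ i, s.2 (ι i) = t.2 i) (f : Outcome s) : Outcome t :=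
  fun i => Fin.cast (by rw [hsize i]) (f (ι i))

lemma outEta_Phi (s t : RState) (ι : Fin (t.1+1) → Fin (s.1+1))
    (hsize : ∀ i, s.2 (ι i) = t.2 i) (f : Outcome s) (i : Fin (t.1+1)) :
    outEta (Phi s t ι hsize f) i = outEta f (ι i) := rfl

lemma outEta_zero (s : RState) (f : Outcome s) (j : Fin (s.1+1)) (h : s.2 j = 0) :
    outEta f j = 0 := by
  have h1 := (f j).isLt
  show ((f j : ℕ)) = 0
  omega

lemma Phi_bijective (s t : RState) (ι : Fin (t.1+1) → Fin (s.1+1))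
    (hinj : Function.Injective ι) (hsize : ∀ i, s.2 (ι i) = t.2 i)
    (hzero : ∀ j, (∀ i, ι i ≠ j) → s.2 j = 0) :
    Function.Bijective (Phi s t ι hsize) := by
  constructor
  · intro f₁ f₂ hf
    funext j
    by_cases hex : ∃ i, ι i = j
    · obtain ⟨i, rfl⟩ := hex
      have h1 := congrArg Fin.val (congrFun hf i)
      apply Fin.ext
      simpa [Phi] using h1
    · push_neg at hex
      apply Fin.ext
      have h1 := outEta_zero s f₁ j (hzero j hex)
      have h2 := outEta_zero s f₂ j (hzero j hex)
      simp only [outEta] at h1 h2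
      rw [h1, h2]
  · intro g
    classical
    refine ⟨fun j => if h : ∃ i, ι i = j then
        Fin.cast (by rw [← hsize h.choose, h.choose_spec]) (g h.choose)
      else ⟨0, Nat.succ_pos _⟩, ?_⟩
    funext i
    have hex : ∃ i', ι i' = ι i := ⟨i, rfl⟩
    have he : hex.choose = i := hinj hex.choose_spec
    apply Fin.ext
    simp only [Phi, Fin.coe_cast]
    rw [dif_pos hex]
    simpa [Fin.coe_cast] using congrArg (fun x => (g x : ℕ)) he

lemma key (s t : RState) (ι : Fin (t.1+1) → Fin (s.1+1)) (hinj : Function.Injective ι)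
    (hsize : ∀ i, s.2 (ι i) = t.2 i) (hzero : ∀ j, (∀ i, ι i ≠ j) → s.2 j = 0)
    (p q : ℕ → ℝ) (hpq : ∀ i, q i.val = p (ι i).val) (G : List ℕ → ℝ) :
    (∑ f : Outcome s, w s.2 (outEta f) p * G (reduceF (step s (outEta f))))
      = ∑ f : Outcome t, w t.2 (outEta f) q * G (reduceF (step t (outEta f))) := by
  classical
  set Φ := Phi s t ι hsize with hΦdef
  have hη0 : ∀ (f : Outcome s) j, (∀ i, ι i ≠ j) → outEta f j = 0 :=
    fun f j hj => outEta_zero s f j (hzero j hj)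
  have hmemmap : ∀ x : Fin (s.1+1),
      x ∉ Finset.univ.map ⟨ι, hinj⟩ → ∀ i, ι i ≠ x := by
    intro x hx i hcontr
    exact hx (Finset.mem_map.2 ⟨i, Finset.mem_univ i, hcontr⟩)
  -- weight equality
  have hw : ∀ f : Outcome s, w s.2 (outEta f) p = w t.2 (outEta (Φ f)) q := by
    intro f
    unfold w
    have step1 : (∏ j ∈ Finset.univ.map ⟨ι, hinj⟩,
          (Nat.choose (s.2 j) (outEta f j) : ℝ) * (1 - p j.val) ^ (outEta f j)
            * (p j.val) ^ (s.2 j - outEta f j))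
        = ∏ j, (Nat.choose (s.2 j) (outEta f j) : ℝ) * (1 - p j.val) ^ (outEta f j)
            * (p j.val) ^ (s.2 j - outEta f j) := by
      apply Finset.prod_subset (Finset.subset_univ _)
      intro x _ hx
      have h0 : s.2 x = 0 := hzero x (hmemmap x hx)
      have h0' : outEta f x = 0 := hη0 f x (hmemmap x hx)
      simp [h0, h0']
    rw [← step1, Finset.prod_map]
    apply Finset.prod_congr rfl
    intro i _
    simp only [Function.Embedding.coeFn_mk, outEta_Phi, ← hsize i, hpq i, hΦdef]
  -- transmission count equality
  have hT : ∀ f : Outcome s,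
      (∑ j, (s.2 j - outEta f j)) = ∑ i, (t.2 i - outEta (Φ f) i) := by
    intro f
    have step1 : (∑ j ∈ Finset.univ.map ⟨ι, hinj⟩, (s.2 j - outEta f j))
        = ∑ j, (s.2 j - outEta f j) := by
      apply Finset.sum_subset (Finset.subset_univ _)
      intro x _ hx
      rw [hzero x (hmemmap x hx), hη0 f x (hmemmap x hx)]
      omega
    rw [← step1, Finset.sum_map]
    apply Finset.sum_congr rfl
    intro i _
    simp only [Function.Embedding.coeFn_mk, outEta_Phi, hsize i, hΦdef]
  -- reduced next states equal
  have hstep : ∀ f : Outcome s,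
      reduceF (step s (outEta f)) = reduceF (step t (outEta (Φ f))) := by
    intro f
    unfold step
    rw [← hT f]
    have hmap : Multiset.map (fun i => outEta f (ι i)) Finset.univ.val
        = Multiset.map (outEta (Φ f)) Finset.univ.val := by
      apply congrArg (fun h => Multiset.map h Finset.univ.val)
      funext i
      exact (outEta_Phi s t ι hsize f i).symm
    by_cases hc : (∑ j, (s.2 j - outEta f j)) ≤ 1
    · rw [if_pos hc, if_pos hc]
      apply reduceF_eq_of_msF
      show (Multiset.map (outEta f) Finset.univ.val).filter (· ≠ 0)
        = (Multiset.map (outEta (Φ f)) Finset.univ.val).filter (· ≠ 0)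
      rw [msF_aux ι hinj (outEta f) (hη0 f), hmap]
    · rw [if_neg hc, if_neg hc]
      apply reduceF_eq_of_msF
      show (Multiset.map (Fin.snoc (outEta f) (∑ j, (s.2 j - outEta f j)))
          Finset.univ.val).filter (· ≠ 0)
        = (Multiset.map (Fin.snoc (outEta (Φ f)) (∑ j, (s.2 j - outEta f j)))
          Finset.univ.val).filter (· ≠ 0)
      rw [msF_snoc, msF_snoc]
      have hT0 : (∑ j, (s.2 j - outEta f j)) ≠ 0 := by omega
      rw [Multiset.filter_cons_of_pos (p := fun x => x ≠ 0) _ hT0,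
        Multiset.filter_cons_of_pos (p := fun x => x ≠ 0) _ hT0,
        msF_aux ι hinj (outEta f) (hη0 f), hmap]
  exact Fintype.sum_bijective Φ (Phi_bijective s t ι hinj hsize hzero) _ _
    (fun f => by rw [hw f, hstep f])

/-- **Theorem 2.** For every `i ≥ 0` and every state `s`, `V_i(s) = V⁻_i(F(s))`. -/
theorem valueIteration_eq_reduced (i : ℕ) (s : RState) :
    Vit i s = Vred i (reduceF s) := by
  induction i generalizing s with
  | zero => rfl
  | succ i ih =>
    rw [Vit, Vred, reduceF_sum s]
    by_cases h0 : sN s = 0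
    · rw [if_pos h0, if_pos h0]
    · rw [if_neg h0, if_neg h0]
      congr 1
      have hms : ((reduceF s : List ℕ) : Multiset ℕ)
          = (Finset.univ.val.map s.2).filter (· ≠ 0) := by
        unfold reduceF
        rw [Multiset.coe_eq_coe.2 (List.perm_insertionSort _ _)]
        exact coe_filter_ofFn s.2
      obtain ⟨ι₀, hinj₀, -, hval₀, hcompl₀⟩ :=
        exists_inj (s.1+1) (reduceF s) s.2 Finset.univ hms
      have hne : (reduceF s).length ≠ 0 := by
        intro e
        apply h0
        rw [← reduceF_sum s, List.length_eq_zero_iff.1 e]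
        rfl
      have hlen : (ofList (reduceF s)).1 + 1 = (reduceF s).length := by
        show (reduceF s).length - 1 + 1 = (reduceF s).length
        omega
      set ι : Fin ((ofList (reduceF s)).1 + 1) → Fin (s.1+1) :=
        fun i => ι₀ (Fin.cast hlen i) with hι
      have hinj : Function.Injective ι := by
        intro a b hab
        have h2 := congrArg Fin.val (hinj₀ hab)
        exact Fin.ext h2
      have hsize : ∀ i, s.2 (ι i) = (ofList (reduceF s)).2 i := by
        intro i
        show s.2 (ι₀ _) = (reduceF s).getD i.val 0
        rw [hval₀]
        rfl
      have hzero : ∀ j, (∀ i', ι i' ≠ j) → s.2 j = 0 := by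
        intro j hj
        refine hcompl₀ j (Finset.mem_univ j) ?_
        intro k hk
        refine hj (Fin.cast hlen.symm k) ?_
        show ι₀ (Fin.cast hlen (Fin.cast hlen.symm k)) = j
        have hcc : Fin.cast hlen (Fin.cast hlen.symm k) = k := Fin.ext rfl
        rw [hcc]; exact hk
      apply Set.ext
      intro x
      simp only [Set.mem_setOf_eq, ih]
      constructor
      · rintro ⟨p, hp, rfl⟩
        refine ⟨fun k =>
            if h : k < (ofList (reduceF s)).1 + 1 then p (ι ⟨k, h⟩).val else 0, ?_, ?_⟩
        · intro k hk
          dsimp only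
          rw [dif_pos hk]
          exact hp _ (ι ⟨k, hk⟩).isLt
        · congr 1
          apply key s (ofList (reduceF s)) ι hinj hsize hzero
          intro j
          rw [dif_pos j.isLt]
      · rintro ⟨q, hq, rfl⟩
        classical
        refine ⟨fun k => if h : ∃ i', ((ι i' : Fin (s.1+1)) : ℕ) = k
            then q (h.choose : ℕ) else 0, ?_, ?_⟩
        · intro k hk
          dsimp only
          by_cases h : ∃ i', ((ι i' : Fin (s.1+1)) : ℕ) = k
          · rw [dif_pos h]; exact hq _ h.choose.isLt
          · rw [dif_neg h]; exact ⟨le_refl 0, zero_le_one⟩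
        · congr 1
          refine (key s (ofList (reduceF s)) ι hinj hsize hzero _ q ?_ (Vred i)).symm
          intro j
          have hex : ∃ i', ((ι i' : Fin (s.1+1)) : ℕ) = ((ι j : Fin (s.1+1)) : ℕ) := ⟨j, rfl⟩
          rw [dif_pos hex]
          have hc : hex.choose = j := hinj (Fin.val_injective hex.choose_spec)
          rw [hc]
end

section
/- Let s be a state such that the number of clusters containing exactly one terminal is at least s_N, and s_N ≥ 1. Then for every i ≥ 0 the value-iteration iterates satisfy V_i(s) = min(i, s_N); consequently lim_{i→∞} V_i(s) = s_N. Moreover, for every i ≥ 0 the infimum defining V_{i+1}(s) is attained by the deterministic action that assigns transmission probability 1 to one cluster containing exactly one terminal and probability 0 to all other clusters. -/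
open scoped BigOperators

section Aux

lemma w_nonneg {s : RState} {p : ℕ → ℝ} (hp : IsActionOn (s.1 + 1) p) (f : Outcome s) :
    0 ≤ w s.2 (outEta f) p := by
  apply Finset.prod_nonneg
  intro i _
  obtain ⟨h0, h1⟩ := hp i.val i.isLt
  have h2 : (0:ℝ) ≤ 1 - p i.val := by linarith
  exact mul_nonneg (mul_nonneg (Nat.cast_nonneg _) (pow_nonneg h2 _)) (pow_nonneg h0 _)

lemma w_sum_one (s : RState) (p : ℕ → ℝ) :
    ∑ f : Outcome s, w s.2 (outEta f) p = 1 := by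
  have h : ∑ f : Outcome s, w s.2 (outEta f) p
      = ∏ j : Fin (s.1 + 1), ∑ c : Fin (s.2 j + 1),
          (Nat.choose (s.2 j) (c : ℕ) : ℝ) * (1 - p j.val) ^ (c : ℕ)
            * (p j.val) ^ (s.2 j - (c : ℕ)) := by
    rw [Fintype.prod_sum]
    rfl
  rw [h, Finset.prod_eq_one]
  intro j _
  have hb : ∑ c : Fin (s.2 j + 1), (Nat.choose (s.2 j) (c : ℕ) : ℝ) * (1 - p j.val) ^ (c : ℕ)
        * (p j.val) ^ (s.2 j - (c : ℕ))
      = ((1 - p j.val) + p j.val) ^ (s.2 j) := by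
    rw [add_pow]
    rw [Fin.sum_univ_eq_sum_range (fun c : ℕ => (Nat.choose (s.2 j) c : ℝ)
      * (1 - p j.val) ^ c * (p j.val) ^ (s.2 j - c)) (s.2 j + 1)]
    exact Finset.sum_congr rfl fun c _ => by ring
  rw [hb]
  norm_num

lemma sN_le_step (s : RState) (f : Outcome s) :
    sN s ≤ sN (step s (outEta f)) + 1 := by
  have hle : ∀ j, outEta f j ≤ s.2 j := fun j => Fin.is_le (f j)
  have hsum : (∑ j, outEta f j) + ∑ j, (s.2 j - outEta f j) = sN s := by
    rw [← Finset.sum_add_distrib]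
    exact Finset.sum_congr rfl fun j _ => Nat.add_sub_cancel' (hle j)
  unfold step
  split
  · rename_i h
    show sN s ≤ (∑ j : Fin (s.1 + 1), outEta f j) + 1
    omega
  · show sN s ≤ (∑ j : Fin (s.1 + 1 + 1),
      Fin.snoc (outEta f) (∑ j, (s.2 j - outEta f j)) j) + 1
    rw [Fin.sum_univ_castSucc]
    simp only [Fin.snoc_castSucc, Fin.snoc_last]
    omega

lemma elem_lb (i : ℕ) (ihV : ∀ t : RState, min (i : ℝ) (sN t : ℝ) ≤ Vit i t)
    (s : RState) (p : ℕ → ℝ) (hp : IsActionOn (s.1 + 1) p) :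
    min ((i : ℝ) + 1) (sN s : ℝ) ≤
      1 + ∑ f : Outcome s, w s.2 (outEta f) p * Vit i (step s (outEta f)) := by
  set c : ℝ := min (i : ℝ) ((sN s : ℝ) - 1) with hc
  have key : ∀ f : Outcome s, c ≤ Vit i (step s (outEta f)) := by
    intro f
    refine le_trans (min_le_min le_rfl ?_) (ihV (step s (outEta f)))
    have h := sN_le_step s f
    have h2 : (sN s : ℝ) ≤ (sN (step s (outEta f)) : ℝ) + 1 := by exact_mod_cast h
    linarith
  have hsum : c ≤ ∑ f : Outcome s, w s.2 (outEta f) p * Vit i (step s (outEta f)) := by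
    calc c = ∑ f : Outcome s, w s.2 (outEta f) p * c := by
            rw [← Finset.sum_mul, w_sum_one s p, one_mul]
    _ ≤ _ := Finset.sum_le_sum fun f _ => mul_le_mul_of_nonneg_left (key f) (w_nonneg hp f)
  have hmin : min ((i : ℝ) + 1) (sN s : ℝ) ≤ 1 + c := by
    rcases le_total (i : ℝ) ((sN s : ℝ) - 1) with h | h
    · rw [hc, min_eq_left h]; exact le_trans (min_le_left _ _) (by linarith)
    · rw [hc, min_eq_right h]; exact le_trans (min_le_right _ _) (by linarith)
  linarith

lemma Vit_lb : ∀ i : ℕ, ∀ s : RState, min (i : ℝ) (sN s : ℝ) ≤ Vit i s := by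
  intro i
  induction i with
  | zero =>
    intro s
    rw [show Vit 0 s = 0 from rfl, Nat.cast_zero]
    exact min_le_left 0 _
  | succ i ih =>
    intro s
    rw [Vit]
    by_cases h0 : sN s = 0
    · rw [if_pos h0, h0, Nat.cast_zero]
      exact min_le_right _ 0
    · rw [if_neg h0]
      apply le_csInf
      · exact ⟨_, fun _ => (0:ℝ), fun j _ => ⟨le_refl 0, zero_le_one⟩, rfl⟩
      · rintro x ⟨p, hp, rfl⟩
        have h := elem_lb i ih s p hp
        push_cast
        exact h

/-- The state after a successful transmission in singleton cluster `k`. -/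
def sNext (s : RState) (k : Fin (s.1 + 1)) : RState :=
  ⟨s.1, fun j => if j = k then 0 else s.2 j⟩

/-- The sole outcome compatible with the singleton action at `k`. -/
def fSing (s : RState) (k : Fin (s.1 + 1)) : Outcome s :=
  fun j => ⟨if j = k then 0 else s.2 j, by split <;> omega⟩

lemma pk_action (s : RState) (k : Fin (s.1 + 1)) :
    IsActionOn (s.1 + 1) (fun j => if j = k.val then 1 else 0) := by
  intro j _
  dsimp only
  split <;> norm_num

lemma w_fSing (s : RState) (k : Fin (s.1 + 1)) (hk : s.2 k = 1) :
    w s.2 (outEta (fSing s k)) (fun j => if j = k.val then 1 else 0) = 1 := by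
  unfold w
  rw [Finset.prod_eq_one]
  intro i _
  by_cases h : i = k
  · subst h
    simp [outEta, fSing, hk]
  · have hv : i.val ≠ k.val := fun hh => h (Fin.val_injective hh)
    simp [outEta, fSing, h, hv]

lemma w_ne_fSing (s : RState) (k : Fin (s.1 + 1)) (hk : s.2 k = 1)
    (f : Outcome s) (hf : f ≠ fSing s k) :
    w s.2 (outEta f) (fun j => if j = k.val then 1 else 0) = 0 := by
  obtain ⟨j, hj⟩ := Function.ne_iff.mp hf
  unfold w
  apply Finset.prod_eq_zero (Finset.mem_univ j)
  by_cases h : j = k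
  · subst h
    have hv : (f j).val ≠ 0 := by
      intro h0
      exact hj (Fin.ext (by simp [fSing, h0]))
    simp [outEta, zero_pow hv]
  · have hv : j.val ≠ k.val := fun hh => h (Fin.val_injective hh)
    have hne : s.2 j - (f j).val ≠ 0 := by
      have h1 := Fin.is_le (f j)
      have h2 : (f j).val ≠ s.2 j := by
        intro h0
        exact hj (Fin.ext (by simp [fSing, h, h0]))
      omega
    simp [outEta, hv, zero_pow hne]

lemma step_fSing (s : RState) (k : Fin (s.1 + 1)) (hk : s.2 k = 1) :
    step s (outEta (fSing s k)) = sNext s k := by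
  have hs : ∑ j, (s.2 j - outEta (fSing s k) j) = 1 := by
    have h : ∀ j : Fin (s.1 + 1), s.2 j - outEta (fSing s k) j = if j = k then 1 else 0 := by
      intro j
      by_cases h : j = k <;> simp [outEta, fSing, h, hk]
    rw [Finset.sum_congr rfl fun j _ => h j]
    simp
  unfold step
  rw [if_pos (le_of_eq hs)]
  rfl

lemma sN_sNext (s : RState) (k : Fin (s.1 + 1)) (hk : s.2 k = 1) :
    sN (sNext s k) + 1 = sN s := by
  have hpt : ∀ j : Fin (s.1 + 1),
      s.2 j = (if j = k then 1 else 0) + (if j = k then 0 else s.2 j) := by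
    intro j
    by_cases h : j = k <;> simp [h, hk]
  have h2 : ∑ j : Fin (s.1 + 1), (if j = k then (1:ℕ) else 0) = 1 := by simp
  have h3 : ∑ j, s.2 j
      = ∑ j : Fin (s.1 + 1), ((if j = k then 1 else 0) + (if j = k then 0 else s.2 j)) :=
    Finset.sum_congr rfl fun j _ => hpt j
  rw [Finset.sum_add_distrib, h2] at h3
  show (∑ j : Fin (s.1 + 1), (if j = k then 0 else s.2 j)) + 1 = ∑ j, s.2 j
  omega

lemma card_sNext (s : RState) (k : Fin (s.1 + 1)) (hk : s.2 k = 1) :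
    (Finset.univ.filter fun j => (sNext s k).2 j = 1).card + 1
      = (Finset.univ.filter fun j => s.2 j = 1).card := by
  have he : (Finset.univ.filter fun j : Fin (s.1 + 1) => (if j = k then 0 else s.2 j) = 1)
      = (Finset.univ.filter fun j => s.2 j = 1).erase k := by
    ext j
    by_cases h : j = k <;> simp [Finset.mem_erase, h, hk]
  have hmem : k ∈ Finset.univ.filter fun j => s.2 j = 1 := by simp [hk]
  have hpos : 0 < (Finset.univ.filter fun j => s.2 j = 1).card :=
    Finset.card_pos.mpr ⟨k, hmem⟩
  show (Finset.univ.filter fun j : Fin (s.1 + 1) => (if j = k then 0 else s.2 j) = 1).card + 1 = _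
  rw [he, Finset.card_erase_of_mem hmem]
  omega

lemma sum_pk (s : RState) (k : Fin (s.1 + 1)) (hk : s.2 k = 1) (G : RState → ℝ) :
    ∑ f : Outcome s,
      w s.2 (outEta f) (fun j => if j = k.val then 1 else 0) * G (step s (outEta f))
      = G (sNext s k) := by
  rw [Finset.sum_eq_single (fSing s k)]
  · rw [w_fSing s k hk, step_fSing s k hk, one_mul]
  · intro f _ hf
    rw [w_ne_fSing s k hk f hf, zero_mul]
  · intro h
    exact absurd (Finset.mem_univ _) h

lemma singleton_value (i : ℕ) (s : RState) (k : Fin (s.1 + 1)) (hk : s.2 k = 1)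
    (hVi : Vit i (sNext s k) = min (i : ℝ) (sN (sNext s k) : ℝ)) :
    1 + ∑ f : Outcome s,
        w s.2 (outEta f) (fun j => if j = k.val then 1 else 0) * Vit i (step s (outEta f))
      = min ((i : ℝ) + 1) (sN s : ℝ) := by
  rw [sum_pk s k hk, hVi]
  have hsn := sN_sNext s k hk
  have hc : (sN (sNext s k) : ℝ) = (sN s : ℝ) - 1 := by
    have h : ((sN (sNext s k) : ℕ) : ℝ) + 1 = ((sN s : ℕ) : ℝ) := by exact_mod_cast hsn
    linarith
  rw [hc]
  rcases le_total (i : ℝ) ((sN s : ℝ) - 1) with h | h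
  · rw [min_eq_left h, min_eq_left (by linarith)]
    ring
  · rw [min_eq_right h, min_eq_right (by linarith)]
    ring

lemma Vit_G : ∀ i : ℕ, ∀ s : RState,
    sN s ≤ (Finset.univ.filter fun j => s.2 j = 1).card →
    Vit i s = min (i : ℝ) (sN s : ℝ) := by
  intro i
  induction i with
  | zero =>
    intro s _
    rw [show Vit 0 s = 0 from rfl, Nat.cast_zero]
    exact (min_eq_left (Nat.cast_nonneg _)).symm
  | succ i ih =>
    intro s hG
    by_cases h0 : sN s = 0
    · rw [Vit, if_pos h0, h0, Nat.cast_zero]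
      have : (0:ℝ) ≤ ((i : ℕ) + 1 : ℕ) := Nat.cast_nonneg _
      rw [min_eq_right (by exact_mod_cast this)]
    · have h1 : 1 ≤ sN s := Nat.one_le_iff_ne_zero.mpr h0
      obtain ⟨k, hkmem⟩ := Finset.card_pos.mp (lt_of_lt_of_le h1 hG)
      have hk : s.2 k = 1 := (Finset.mem_filter.mp hkmem).2
      have hG' : sN (sNext s k) ≤ (Finset.univ.filter fun j => (sNext s k).2 j = 1).card := by
        have hc := card_sNext s k hk
        have hs := sN_sNext s k hk
        omega
      have hval := singleton_value i s k hk (ih _ hG')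
      rw [Vit, if_neg h0]
      push_cast
      apply le_antisymm
      · refine le_trans (csInf_le ?_ ?_) (le_of_eq hval)
        · exact ⟨min ((i : ℝ) + 1) (sN s : ℝ), by
            rintro x ⟨p, hp, rfl⟩
            exact elem_lb i (Vit_lb i) s p hp⟩
        · exact ⟨_, pk_action s k, rfl⟩
      · refine le_csInf ⟨_, fun _ => (0:ℝ), fun j _ => ⟨le_refl 0, zero_le_one⟩, rfl⟩ ?_
        rintro x ⟨p, hp, rfl⟩
        exact elem_lb i (Vit_lb i) s p hp

end Aux

/-- **Theorem 3.** Let `s` be a state whose number of singleton clusters (clusters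
containing exactly one terminal) is at least `s_N`, with `s_N ≥ 1`.  Then
`V_i(s) = min(i, s_N)` for every `i ≥ 0`, hence `V_i(s) → s_N` as `i → ∞`; moreover,
for every `i ≥ 0` the infimum defining `V_{i+1}(s)` is attained by the deterministic
action transmitting with probability `1` in one singleton cluster `k` and with
probability `0` in all other clusters. -/
theorem valueIteration_singletonPolicy (s : RState)
    (hG : sN s ≤ (Finset.univ.filter (fun j => s.2 j = 1)).card)
    (hN : 1 ≤ sN s) :
    (∀ i : ℕ, Vit i s = min (i : ℝ) (sN s : ℝ)) ∧
    Filter.Tendsto (fun i => Vit i s) Filter.atTop (nhds (sN s : ℝ)) ∧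
    (∀ i : ℕ, ∀ k : Fin (s.1 + 1), s.2 k = 1 →
      Vit (i + 1) s = 1 + ∑ f : Outcome s,
        w s.2 (outEta f) (fun j => if j = k.val then 1 else 0)
          * Vit i (step s (outEta f))) := by
  have part1 : ∀ i : ℕ, Vit i s = min (i : ℝ) (sN s : ℝ) := fun i => Vit_G i s hG
  refine ⟨part1, ?_, ?_⟩
  · have hev : (fun _ : ℕ => (sN s : ℝ)) =ᶠ[Filter.atTop] fun i => Vit i s := by
      filter_upwards [Filter.eventually_ge_atTop (sN s)] with i hi
      rw [part1 i, min_eq_right (by exact_mod_cast hi)]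
    exact Filter.Tendsto.congr' hev tendsto_const_nhds
  · intro i k hk
    have hG' : sN (sNext s k) ≤ (Finset.univ.filter fun j => (sNext s k).2 j = 1).card := by
      have hc := card_sNext s k hk
      have hs := sN_sNext s k hk
      omega
    have hval := singleton_value i s k hk (Vit_G i (sNext s k) hG')
    rw [part1 (i + 1), hval]
    push_cast
    rfl
end

section
/- Let b be a belief state all of whose support states share the same cluster count M, whose support is contained in the set of states with s_N ≤ 1, and which assigns positive probability to at least one state with s_N = 1. Then for every i ≥ 1, the belief value-iteration iterates satisfy Ṽ_i(b) = 1, and the infimum defining Ṽ_i(b) is attained by the all-ones action p with p(j) = 1 for all j ≤ M. -/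
open scoped BigOperators

/-- The three possible channel observations: `idle` (`c = 0`), `succ` (`c = 1`),
and `coll` (`c = e`). -/
inductive Obs : Type
  | idle : Obs
  | succ : Obs
  | coll : Obs
  deriving DecidableEq

instance : Fintype Obs :=
  ⟨{Obs.idle, Obs.succ, Obs.coll}, fun x => by cases x <;> simp⟩

/-- The observation kernel `Q(o | s, s')`. -/
noncomputable def Qobs (o : Obs) (s s' : RState) : ℝ :=
  match o with
  | Obs.idle => if s' = s then 1 else 0
  | Obs.succ => if sN s' + 1 = sN s ∧ s'.1 = s.1 then 1 else 0
  | Obs.coll => if sN s' = sN s ∧ s'.1 = s.1 + 1 then 1 else 0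

/-- The joint weight `b_p(s', o) = ∑_s Q(o | s, s') P(s' | s, p) b(s)`. -/
noncomputable def bJoint (b : RState → ℝ) (p : ℕ → ℝ) (o : Obs) (s' : RState) : ℝ :=
  ∑ᶠ s : RState, Qobs o s s' * transP s p s' * b s

/-- The probability `b_p(o) = ∑_{s'} b_p(s', o)` of observing `o` from belief `b`
under action `p`. -/
noncomputable def bProb (b : RState → ℝ) (p : ℕ → ℝ) (o : Obs) : ℝ :=
  ∑ᶠ s' : RState, bJoint b p o s'

/-- The posterior belief `b^o_p(s') = b_p(s', o) / b_p(o)`. -/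
noncomputable def bPost (b : RState → ℝ) (p : ℕ → ℝ) (o : Obs) : RState → ℝ :=
  fun s' => bJoint b p o s' / bProb b p o

open scoped Classical in
/-- The belief value-iteration iterates `Ṽ_i`: `Ṽ_0 = 0`; beliefs assigning
probability `1` to target states have value `0`; otherwise `Ṽ_{i+1}(b)` is the
infimum over actions `p ∈ [0,1]^M` (`M` the common cluster count of the support of
`b`) of `1 + ∑_{o : b_p(o) > 0} b_p(o) Ṽ_i(b^o_p)`. -/
noncomputable def Vtil : ℕ → (RState → ℝ) → ℝ
  | 0, _ => 0
  | i + 1, b =>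
    if ∀ s, sN s ≠ 0 → b s = 0 then 0
    else sInf { x : ℝ | ∃ m : ℕ, (∀ s, b s ≠ 0 → s.1 = m) ∧
      ∃ p : ℕ → ℝ, IsActionOn (m + 1) p ∧
        x = 1 + ∑ o : Obs,
          if 0 < bProb b p o then bProb b p o * Vtil i (bPost b p o) else 0 }

/-- The target state with `m + 1` empty clusters. -/
def targetState (m : ℕ) : RState := ⟨m, fun _ => 0⟩

lemma sN_targetState (m : ℕ) : sN (targetState m) = 0 := by
  simp [sN, targetState]

lemma Vtil_zero_of_target {i : ℕ} {c : RState → ℝ} (h : ∀ s, sN s ≠ 0 → c s = 0) :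
    Vtil i c = 0 := by
  cases i with
  | zero => rfl
  | succ i => simp only [Vtil]; exact if_pos h

lemma Qobs_nonneg (o : Obs) (s s' : RState) : 0 ≤ Qobs o s s' := by
  cases o <;> (simp only [Qobs]; split <;> norm_num)

lemma w_nonneg_s7 {M : ℕ} (η η' : Fin M → ℕ) (p : ℕ → ℝ)
    (hp : ∀ j < M, 0 ≤ p j ∧ p j ≤ 1) : 0 ≤ w η η' p := by
  apply Finset.prod_nonneg
  intro i _
  obtain ⟨h0, h1⟩ := hp i.val i.isLt
  exact mul_nonneg (mul_nonneg (Nat.cast_nonneg _) (pow_nonneg (by linarith) _))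
    (pow_nonneg h0 _)

lemma transP_nonneg (s : RState) (p : ℕ → ℝ)
    (hp : ∀ j < s.1 + 1, 0 ≤ p j ∧ p j ≤ 1) (s' : RState) : 0 ≤ transP s p s' := by
  apply Finset.sum_nonneg
  intro f _
  split
  · exact w_nonneg_s7 _ _ _ hp
  · exact le_refl 0

lemma bJoint_nonneg {b : RState → ℝ} (hb : ∀ s, 0 ≤ b s) {m : ℕ}
    (hM : ∀ s, b s ≠ 0 → s.1 = m) {p : ℕ → ℝ} (hp : IsActionOn (m + 1) p)
    (o : Obs) (s' : RState) : 0 ≤ bJoint b p o s' := by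
  apply finsum_nonneg
  intro s
  rcases eq_or_ne (b s) 0 with h | h
  · simp [h]
  · have hm := hM s h
    refine mul_nonneg (mul_nonneg (Qobs_nonneg o s s') ?_) (hb s)
    exact transP_nonneg s p (fun j hj => hp j (by omega)) s'

lemma bPost_nonneg {b : RState → ℝ} (hb : ∀ s, 0 ≤ b s) {m : ℕ}
    (hM : ∀ s, b s ≠ 0 → s.1 = m) {p : ℕ → ℝ} (hp : IsActionOn (m + 1) p)
    (o : Obs) (s' : RState) : 0 ≤ bPost b p o s' :=
  div_nonneg (bJoint_nonneg hb hM hp o s')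
    (finsum_nonneg (bJoint_nonneg hb hM hp o))

lemma Vtil_nonneg : ∀ (i : ℕ) (b : RState → ℝ), (∀ s, 0 ≤ b s) → 0 ≤ Vtil i b := by
  intro i
  induction i with
  | zero => intro b _; exact le_refl 0
  | succ i ih =>
    intro b hb
    simp only [Vtil]
    split
    · exact le_refl 0
    · set S := {x : ℝ | ∃ m : ℕ, (∀ s, b s ≠ 0 → s.1 = m) ∧
        ∃ p : ℕ → ℝ, IsActionOn (m + 1) p ∧
          x = 1 + ∑ o : Obs,
            if 0 < bProb b p o then bProb b p o * Vtil i (bPost b p o) else 0} with hS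
      rcases Set.eq_empty_or_nonempty S with hSe | hSne
      · rw [hSe, Real.sInf_empty]
      · refine le_trans zero_le_one (le_csInf hSne ?_)
        rintro x ⟨m, hm, p, hp, rfl⟩
        have hsum : 0 ≤ ∑ o : Obs,
            if 0 < bProb b p o then bProb b p o * Vtil i (bPost b p o) else 0 := by
          apply Finset.sum_nonneg
          intro o _
          split
          · next h => exact mul_nonneg h.le (ih _ (bPost_nonneg hb hm hp o))
          · exact le_refl 0
        linarith

/-- **Theorem 1.** Let `b` be a belief state (finitely supported probability
distribution over states) whose support states all share the same cluster count,
are all states with at most one active terminal, and which assigns positive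
probability to at least one state with exactly one active terminal.  Then for every
`i ≥ 1` the belief value-iteration iterates satisfy `Ṽ_i(b) = 1`, and the infimum
defining `Ṽ_i(b)` is attained by the all-ones action `p ≡ 1`. -/
theorem beliefValueIteration_oneActive (b : RState → ℝ) (m : ℕ)
    (hfin : (Function.support b).Finite)
    (hpos : ∀ s, 0 ≤ b s)
    (hsum : ∑ᶠ s, b s = 1)
    (hM : ∀ s, b s ≠ 0 → s.1 = m)
    (hle1 : ∀ s, b s ≠ 0 → sN s ≤ 1)
    (hone : ∃ s, 0 < b s ∧ sN s = 1) :
    ∀ i : ℕ,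
      Vtil (i + 1) b = 1 ∧
      Vtil (i + 1) b = 1 + ∑ o : Obs,
        (if 0 < bProb b (fun _ => 1) o
         then bProb b (fun _ => 1) o * Vtil i (bPost b (fun _ => 1) o) else 0) := by
  classical
  obtain ⟨s0, hs0pos, hs0N⟩ := hone
  set p1 : ℕ → ℝ := fun _ => 1 with hp1def
  set Z : RState := targetState m with hZdef
  have hZN : sN Z = 0 := sN_targetState m
  -- transition probabilities under the all-ones action
  have htrans : ∀ s : RState, b s ≠ 0 → ∀ s' : RState,
      transP s p1 s' = if s' = Z then 1 else 0 := by
    intro s hbs s'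
    have hle : sN s ≤ 1 := hle1 s hbs
    have hm : s.1 = m := hM s hbs
    obtain ⟨n, η⟩ := s
    simp only at hm
    obtain rfl : m = n := hm.symm
    have hout : outEta (fun _ => 0 : Outcome ⟨m, η⟩) = fun _ => 0 := by
      funext j; simp [outEta]
    have hstep : step ⟨m, η⟩ (fun _ => 0) = Z := by
      rw [step, if_pos]
      · rfl
      · simpa [sN] using hle
    have hw : w η (fun _ => 0) p1 = 1 := by
      simp [w, hp1def]
    have key : ∀ f : Outcome ⟨m, η⟩, f ≠ (fun _ => 0) →
        (if step ⟨m, η⟩ (outEta f) = s' then w η (outEta f) p1 else 0) = 0 := by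
      intro f hf
      have hwz : w η (outEta f) p1 = 0 := by
        obtain ⟨j, hj⟩ : ∃ j, f j ≠ 0 := by
          by_contra h
          push_neg at h
          exact hf (funext h)
        apply Finset.prod_eq_zero (Finset.mem_univ j)
        have hjv : outEta f j ≠ 0 := by
          intro h; exact hj (Fin.ext (by rw [Fin.val_zero]; exact h))
        simp [hp1def, zero_pow hjv]
      split <;> simp [hwz]
    rw [transP, Fintype.sum_eq_single (fun _ => 0 : Outcome ⟨m, η⟩) key,
      hout, hstep, hw]
    simp [eq_comm]
  -- joint weights
  have hsupp : ∀ (o : Obs) (s' : RState),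
      (Function.support fun s => Qobs o s s' * transP s p1 s' * b s) ⊆ ↑hfin.toFinset := by
    intro o s' s hs
    refine hfin.mem_toFinset.2 (Function.mem_support.2 fun h => hs ?_)
    simp [h]
  have hbJ : ∀ (o : Obs) (s' : RState), bJoint b p1 o s' =
      if s' = Z then (∑ s ∈ hfin.toFinset, Qobs o s Z * b s) else 0 := by
    intro o s'
    rw [bJoint, finsum_eq_finset_sum_of_support_subset _ (hsupp o s')]
    by_cases h : s' = Z
    · subst h
      rw [if_pos rfl]
      apply Finset.sum_congr rfl
      intro s hs
      have hbs : b s ≠ 0 := hfin.mem_toFinset.1 hs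
      rw [htrans s hbs, if_pos rfl, mul_one]
    · rw [if_neg h]
      apply Finset.sum_eq_zero
      intro s hs
      rw [htrans s (hfin.mem_toFinset.1 hs), if_neg h, mul_zero, zero_mul]
  -- observation probabilities
  have hbProb : ∀ o : Obs, bProb b p1 o = ∑ s ∈ hfin.toFinset, Qobs o s Z * b s := by
    intro o
    rw [bProb, finsum_eq_single _ Z]
    · rw [hbJ, if_pos rfl]
    · intro s' hs'
      rw [hbJ, if_neg hs']
  -- posteriors are supported on target states, hence have value 0
  have hpost : ∀ (o : Obs) (k : ℕ), Vtil k (bPost b p1 o) = 0 := by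
    intro o k
    apply Vtil_zero_of_target
    intro s hsN
    have hne : s ≠ Z := fun h => hsN (h ▸ hZN)
    show bJoint b p1 o s / bProb b p1 o = 0
    rw [hbJ, if_neg hne, zero_div]
  have hsum0 : ∀ k : ℕ, (∑ o : Obs,
      if 0 < bProb b p1 o then bProb b p1 o * Vtil k (bPost b p1 o) else 0) = 0 := by
    intro k
    apply Finset.sum_eq_zero
    intro o _
    split
    · rw [hpost o k, mul_zero]
    · rfl
  -- the belief is not a target belief
  have hne : ¬ ∀ s, sN s ≠ 0 → b s = 0 := by
    push_neg
    exact ⟨s0, by rw [hs0N]; exact one_ne_zero, ne_of_gt hs0pos⟩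
  intro i
  have hVeq : Vtil (i + 1) b = sInf {x : ℝ | ∃ m' : ℕ, (∀ s, b s ≠ 0 → s.1 = m') ∧
      ∃ p : ℕ → ℝ, IsActionOn (m' + 1) p ∧
        x = 1 + ∑ o : Obs,
          if 0 < bProb b p o then bProb b p o * Vtil i (bPost b p o) else 0} := by
    simp only [Vtil]
    exact if_neg hne
  have hmem : (1 : ℝ) ∈ {x : ℝ | ∃ m' : ℕ, (∀ s, b s ≠ 0 → s.1 = m') ∧
      ∃ p : ℕ → ℝ, IsActionOn (m' + 1) p ∧
        x = 1 + ∑ o : Obs,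
          if 0 < bProb b p o then bProb b p o * Vtil i (bPost b p o) else 0} := by
    refine ⟨m, hM, p1, fun j _ => ⟨zero_le_one, le_refl 1⟩, ?_⟩
    rw [hsum0 i, add_zero]
  have hlb : ∀ x ∈ {x : ℝ | ∃ m' : ℕ, (∀ s, b s ≠ 0 → s.1 = m') ∧
      ∃ p : ℕ → ℝ, IsActionOn (m' + 1) p ∧
        x = 1 + ∑ o : Obs,
          if 0 < bProb b p o then bProb b p o * Vtil i (bPost b p o) else 0},
      (1 : ℝ) ≤ x := by
    rintro x ⟨m', hm', p, hp, rfl⟩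
    have h0 : 0 ≤ ∑ o : Obs,
        if 0 < bProb b p o then bProb b p o * Vtil i (bPost b p o) else 0 := by
      apply Finset.sum_nonneg
      intro o _
      split
      · next h => exact mul_nonneg h.le (Vtil_nonneg i _ (bPost_nonneg hpos hm' hp o))
      · exact le_refl 0
    linarith
  have h1 : Vtil (i + 1) b = 1 := by
    rw [hVeq]
    exact le_antisymm (csInf_le ⟨1, hlb⟩ hmem) (le_csInf ⟨1, hmem⟩ hlb)
  refine ⟨h1, ?_⟩
  rw [h1, hsum0 i, add_zero]
end
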